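/- For d > 0 and w > 0, the collision probability with random offset satisfies the closed form: P_{w,q} = 2Φ(w/√d) - 1 - (2/(√(2π) w/√d)) + (2/(w/√d)) φ(w/√d), where φ and Φ are the standard normal pdf and cdf. That is, ∫_0^w (2/√d) φ(t/√d)(1 - t/w) dt = 2Φ(w/√d) - 1 - √(2/π)·(√d/w) + (2√d/w) φ(w/√d). -/

import Mathlib

open MeasureTheory ProbabilityTheory Real Set

/-- Standard normal density. -/
noncomputable def stdPdf (x : ℝ) : ℝ := (Real.sqrt (2 * Real.pi))⁻¹ * Real.exp (-x ^ 2 / 2)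

/-- Standard normal CDF. -/
noncomputable def Phi (x : ℝ) : ℝ := ∫ t in Set.Iic x, stdPdf t

lemma stdPdf_continuous : Continuous stdPdf := by
  unfold stdPdf; fun_prop

lemma stdPdf_integrable : Integrable stdPdf := by
  have h : Integrable (fun x : ℝ => Real.exp (-(1/2 : ℝ) * x ^ 2)) :=
    integrable_exp_neg_mul_sq (by norm_num)
  have h2 := h.const_mul (Real.sqrt (2 * Real.pi))⁻¹
  refine h2.congr (Filter.Eventually.of_forall fun x => ?_)
  unfold stdPdf
  ring_nf

lemma stdPdf_hasDerivAt (x : ℝ) : HasDerivAt stdPdf (-x * stdPdf x) x := by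
  have h1 : HasDerivAt (fun y : ℝ => -y ^ 2 / 2) (-x) x := by
    have h0 : HasDerivAt (fun y : ℝ => -y ^ 2 / 2) (-(2 * x ^ 1) / 2) x :=
      (((hasDerivAt_pow 2 x).neg).div_const 2)
    have he : -(2 * x ^ 1) / 2 = -x := by ring
    rwa [he] at h0
  have h2 := (h1.exp).const_mul (Real.sqrt (2 * Real.pi))⁻¹
  have : HasDerivAt stdPdf ((Real.sqrt (2 * Real.pi))⁻¹ * (Real.exp (-x ^ 2 / 2) * -x)) x := h2
  convert this using 1
  unfold stdPdf; ring

lemma Phi_hasDerivAt (x : ℝ) : HasDerivAt Phi (stdPdf x) x := by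
  have heq : ∀ y : ℝ, Phi y = Phi 0 + ∫ t in (0:ℝ)..y, stdPdf t := by
    intro y
    have := intervalIntegral.integral_Iic_sub_Iic
      (stdPdf_integrable.integrableOn) (stdPdf_integrable.integrableOn)
      (a := (0:ℝ)) (b := y)
    unfold Phi
    linarith [this]
  have hD : HasDerivAt (fun y => Phi 0 + ∫ t in (0:ℝ)..y, stdPdf t) (stdPdf x) x := by
    refine (intervalIntegral.integral_hasDerivAt_right
      (stdPdf_continuous.intervalIntegrable 0 x)
      (stdPdf_continuous.stronglyMeasurable.stronglyMeasurableAtFilter)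
      (stdPdf_continuous.continuousAt)).const_add (Phi 0)
  exact hD.congr_of_eventuallyEq (Filter.Eventually.of_forall fun y => (heq y))

lemma Phi_zero : Phi 0 = 1 / 2 := by
  have heven : ∀ t : ℝ, stdPdf (-t) = stdPdf t := by
    intro t; unfold stdPdf; ring_nf
  have h1 : Phi 0 = ∫ t in Set.Ioi (0:ℝ), stdPdf t := by
    unfold Phi
    rw [← neg_zero, ← integral_comp_neg_Iic (0:ℝ) stdPdf, neg_zero]
    exact setIntegral_congr_fun measurableSet_Iic fun t _ => (heven t).symm
  rw [h1]
  have h2 : ∫ t in Set.Ioi (0:ℝ), stdPdf t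
      = (Real.sqrt (2 * Real.pi))⁻¹ * ∫ t in Set.Ioi (0:ℝ), Real.exp (-(1/2:ℝ) * t ^ 2) := by
    rw [← integral_const_mul]
    refine setIntegral_congr_fun measurableSet_Ioi fun t _ => ?_
    unfold stdPdf; ring_nf
  rw [h2, integral_gaussian_Ioi]
  have hpi : (0:ℝ) < Real.pi := Real.pi_pos
  have : Real.pi / (1/2 : ℝ) = 2 * Real.pi := by ring
  rw [this]
  have hne : Real.sqrt (2 * Real.pi) ≠ 0 := by positivity
  field_simp

lemma sqrt_two_div_pi : Real.sqrt (2 / Real.pi) = 2 / Real.sqrt (2 * Real.pi) := by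
  have hpi : (0:ℝ) < Real.pi := Real.pi_pos
  rw [eq_div_iff (by positivity : Real.sqrt (2 * Real.pi) ≠ 0)]
  rw [← Real.sqrt_mul (by positivity : (0:ℝ) ≤ 2 / Real.pi)]
  have : 2 / Real.pi * (2 * Real.pi) = 4 := by field_simp; ring
  rw [this]
  rw [show (4:ℝ) = 2 ^ 2 by norm_num, Real.sqrt_sq (by norm_num)]

/-- Closed form of the random-offset collision probability. -/
theorem stmt4 (d w : ℝ) (hd : 0 < d) (hw : 0 < w) :
    ∫ t in Set.Ioc (0 : ℝ) w,
        (2 / Real.sqrt d) * stdPdf (t / Real.sqrt d) * (1 - t / w)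
      = 2 * Phi (w / Real.sqrt d) - 1 - Real.sqrt (2 / Real.pi) * (Real.sqrt d / w)
        + (2 * Real.sqrt d / w) * stdPdf (w / Real.sqrt d) := by
  set s := Real.sqrt d with hs
  have hs0 : 0 < s := Real.sqrt_pos.mpr hd
  -- the antiderivative
  set F : ℝ → ℝ := fun t => 2 * Phi (t / s) + (2 * s / w) * stdPdf (t / s) with hF
  have hderiv : ∀ t : ℝ, HasDerivAt F ((2 / s) * stdPdf (t / s) * (1 - t / w)) t := by
    intro t
    have hdiv : HasDerivAt (fun y : ℝ => y / s) (1 / s) t := by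
      simpa using (hasDerivAt_id t).div_const s
    have h1 : HasDerivAt (fun y : ℝ => Phi (y / s)) (stdPdf (t / s) * (1 / s)) t :=
      by have := (Phi_hasDerivAt (t / s)).comp t hdiv; exact this
    have h2 : HasDerivAt (fun y : ℝ => stdPdf (y / s))
        ((-(t / s) * stdPdf (t / s)) * (1 / s)) t :=
      by have := (stdPdf_hasDerivAt (t / s)).comp t hdiv; exact this
    have h3 := (h1.const_mul 2).add (h2.const_mul (2 * s / w))
    refine h3.congr_deriv ?_
    field_simp
    ring
  have hcont : Continuous fun t : ℝ => (2 / s) * stdPdf (t / s) * (1 - t / w) := by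
    have := stdPdf_continuous; fun_prop
  have hFTC := intervalIntegral.integral_eq_sub_of_hasDerivAt
    (f := F) (f' := fun t => (2 / s) * stdPdf (t / s) * (1 - t / w))
    (a := 0) (b := w) (fun x _ => hderiv x) (hcont.intervalIntegrable 0 w)
  rw [← intervalIntegral.integral_of_le hw.le, hFTC]
  have hstd0 : stdPdf 0 = (Real.sqrt (2 * Real.pi))⁻¹ := by
    unfold stdPdf; norm_num
  have hzero : (0:ℝ) / s = 0 := zero_div s
  rw [hF]
  simp only [hzero, Phi_zero, hstd0, sqrt_two_div_pi]
  have hsq : Real.sqrt (2 * Real.pi) > 0 := by positivity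
  field_simp
  ring
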